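/- arXiv:2512.14619 — 2 statements merged into one kernel-verified Lean document; each statement's English description precedes it below -/
import Mathlib

section
/- Let A be an n×n row-stochastic matrix, and suppose c = ‖A‖₁ > 1 (maximum column sum). Define B = ((c-1)/2)·I − (1/c)·A. Then ‖B‖₁ ≤ (c+1)/2 < c = ‖A‖₁. -/
open Finset

/-- The matrix 1-norm: maximum absolute column sum. -/
noncomputable def matrixOneNorm {n : ℕ} [NeZero n] (A : Matrix (Fin n) (Fin n) ℝ) : ℝ :=
  Finset.univ.sup' Finset.univ_nonempty (fun j => ∑ i, |A i j|)

/-- If A is row-stochastic with 1-norm c > 1, then the matrix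
B = ((c-1)/2)·I − (1/c)·A satisfies ‖B‖₁ ≤ (c+1)/2 < c = ‖A‖₁. -/
theorem gpa_one_norm_lt (n : ℕ) [NeZero n]
    (A : Matrix (Fin n) (Fin n) ℝ)
    (hnonneg : ∀ i j, 0 ≤ A i j) (hrow : ∀ i, ∑ j, A i j = 1)
    (c : ℝ) (hc : c = matrixOneNorm A) (hc1 : 1 < c)
    (B : Matrix (Fin n) (Fin n) ℝ)
    (hB : B = ((c - 1) / 2) • (1 : Matrix (Fin n) (Fin n) ℝ) - (1 / c) • A) :
    matrixOneNorm B ≤ (c + 1) / 2 ∧ (c + 1) / 2 < c := by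
  have hc0 : (0:ℝ) < c := lt_trans one_pos hc1
  constructor
  · apply Finset.sup'_le
    intro j _
    have hsj : ∑ i, |A i j| ≤ c := by
      rw [hc, matrixOneNorm]
      exact Finset.le_sup' (fun j => ∑ i, |A i j|) (Finset.mem_univ j)
    have hId : ∑ i, |(1 : Matrix (Fin n) (Fin n) ℝ) i j| = 1 := by
      simp [Matrix.one_apply, apply_ite abs]
    have key : ∑ i, |B i j| ≤
        (c - 1) / 2 * ∑ i, |(1 : Matrix (Fin n) (Fin n) ℝ) i j|
          + (1 / c) * ∑ i, |A i j| := by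
      rw [Finset.mul_sum, Finset.mul_sum, ← Finset.sum_add_distrib]
      apply Finset.sum_le_sum
      intro i _
      rw [hB]
      simp only [Matrix.sub_apply, Matrix.smul_apply, smul_eq_mul]
      calc |(c - 1) / 2 * (1 : Matrix (Fin n) (Fin n) ℝ) i j - 1 / c * A i j|
          ≤ |(c - 1) / 2 * (1 : Matrix (Fin n) (Fin n) ℝ) i j| + |1 / c * A i j| :=
            abs_sub _ _
        _ = (c - 1) / 2 * |(1 : Matrix (Fin n) (Fin n) ℝ) i j| + 1 / c * |A i j| := by
            rw [abs_mul, abs_mul, abs_of_nonneg (by linarith : (0:ℝ) ≤ (c - 1) / 2),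
              abs_of_nonneg (by positivity : (0:ℝ) ≤ 1 / c)]
    have h2 : (1 / c) * ∑ i, |A i j| ≤ 1 := by
      rw [div_mul_eq_mul_div, one_mul, div_le_one hc0]; exact hsj
    rw [hId, mul_one] at key
    linarith
  · linarith
end

section
/- Let Q̂, K̂ ∈ ℝ^{n×d}, V ∈ ℝ^{n×d}, and scalars γ₀,…,γ_K. Define Z by the recursion Z₀ = γ₀V, M₀ = K̂ᵀV, Z_k = Z_{k−1} + γ_k Q̂ M_{k−1}, M_k = (K̂ᵀQ̂) M_{k−1}. Then Z_K = Σ_{k=0}^K γ_k (Q̂K̂ᵀ)^k V. -/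
/-- Correctness of the scalable GPA forward pass: the recursion
Z₀ = γ₀V, M₀ = K̂ᵀV, Z_{k+1} = Z_k + γ_{k+1} Q̂ M_k, M_{k+1} = (K̂ᵀQ̂) M_k
satisfies Z_K = Σ_{k=0}^K γ_k (Q̂K̂ᵀ)^k V. -/
theorem scalable_gpa_algorithm_correct (n d : ℕ) (Kmax : ℕ)
    (Q Khat V : Matrix (Fin n) (Fin d) ℝ) (γ : ℕ → ℝ)
    (Z : ℕ → Matrix (Fin n) (Fin d) ℝ)
    (M : ℕ → Matrix (Fin d) (Fin d) ℝ)
    (hZ0 : Z 0 = γ 0 • V)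
    (hM0 : M 0 = Khat.transpose * V)
    (hZ : ∀ k : ℕ, Z (k + 1) = Z k + γ (k + 1) • (Q * M k))
    (hM : ∀ k : ℕ, M (k + 1) = (Khat.transpose * Q) * M k) :
    Z Kmax = ∑ k ∈ Finset.range (Kmax + 1), γ k • ((Q * Khat.transpose) ^ k * V) := by
  have hMk : ∀ k : ℕ, Q * M k = (Q * Khat.transpose) ^ (k + 1) * V := by
    intro k
    induction k with
    | zero => simp [hM0, pow_succ, Matrix.mul_assoc]
    | succ k ih =>
      have h1 : Q * M (k + 1) = (Q * Khat.transpose) * (Q * M k) := by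
        rw [hM]; simp [Matrix.mul_assoc]
      rw [h1, ih, ← Matrix.mul_assoc, ← pow_succ']
  induction Kmax with
  | zero => simp [hZ0]
  | succ k ih =>
    rw [hZ, ih, Finset.sum_range_succ _ (k + 1), hMk]
end
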